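/- Let A be a finite set of actions, φ : A → ℝ^d, and π(o; θ) = exp(θᵀφ(o))/Σ_a exp(θᵀφ(a)) the softmax likelihood. If o is undominated (some θ* makes o the strict unique maximizer of θ*ᵀφ(·)), then there exists K > 0 such that any maximizer θ̂ of θ ↦ π(o; θ) over {θ : ‖θ‖₂ ≤ K} satisfies θ̂ᵀφ(o) ≥ θ̂ᵀφ(a) for all a ∈ A. That is, the norm-constrained MLE robot executes an undominated first order. -/

import Mathlib

open Real

noncomputable def softmaxProbE {A : Type*} [Fintype A] {d : ℕ}
    (φ : A → EuclideanSpace ℝ (Fin d)) (o : A) (θ : EuclideanSpace ℝ (Fin d)) : ℝ :=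
  Real.exp (∑ i, θ i * φ o i) / ∑ a : A, Real.exp (∑ i, θ i * φ a i)

-- aux lemma: denominator positive
lemma denom_pos {A : Type*} [Fintype A] [Nonempty A] (g : A → ℝ) :
    0 < ∑ a : A, Real.exp (g a) :=
  Finset.sum_pos (fun a _ => Real.exp_pos _) Finset.univ_nonempty

lemma softmax_lt_half {A : Type*} [Fintype A] [Nonempty A] {d : ℕ}
    (φ : A → EuclideanSpace ℝ (Fin d)) (o : A) (θ : EuclideanSpace ℝ (Fin d))
    (a : A) (ha : ∑ i, θ i * φ o i < ∑ i, θ i * φ a i) :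
    softmaxProbE φ o θ < 1/2 := by
  classical
  have hao : a ≠ o := by rintro rfl; exact lt_irrefl _ ha
  set f : A → ℝ := fun b => ∑ i, θ i * φ b i with hf
  have hsub : ({o, a} : Finset A) ⊆ Finset.univ := Finset.subset_univ _
  have hsum : ∑ b ∈ ({o, a} : Finset A), Real.exp (f b) ≤ ∑ b : A, Real.exp (f b) :=
    Finset.sum_le_sum_of_subset_of_nonneg hsub (fun b _ _ => (Real.exp_pos _).le)
  have hpair : ∑ b ∈ ({o, a} : Finset A), Real.exp (f b) = Real.exp (f o) + Real.exp (f a) := by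
    rw [Finset.sum_pair (Ne.symm hao)]
  have h2 : 2 * Real.exp (f o) < ∑ b : A, Real.exp (f b) := by
    have : Real.exp (f o) < Real.exp (f a) := Real.exp_lt_exp.2 ha
    nlinarith [hsum, hpair]
  have hD : 0 < ∑ b : A, Real.exp (f b) := denom_pos f
  rw [softmaxProbE, div_lt_iff₀ hD]
  nlinarith [Real.exp_pos (f o)]

theorem constrained_mle_robot_obeys_undominated_order
    {A : Type*} [Fintype A] [Nonempty A] {d : ℕ}
    (φ : A → EuclideanSpace ℝ (Fin d)) (o : A)
    (θstar : EuclideanSpace ℝ (Fin d))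
    (hund : ∀ a : A, a ≠ o → ∑ i, θstar i * φ a i < ∑ i, θstar i * φ o i) :
    ∃ K : ℝ, 0 < K ∧
      ∀ θhat : EuclideanSpace ℝ (Fin d), ‖θhat‖ ≤ K →
        (∀ θ : EuclideanSpace ℝ (Fin d), ‖θ‖ ≤ K →
          softmaxProbE φ o θ ≤ softmaxProbE φ o θhat) →
        ∀ a : A, ∑ i, θhat i * φ a i ≤ ∑ i, θhat i * φ o i := by
  classical
  by_cases hall : ∀ a : A, a = o
  · refine ⟨1, one_pos, fun θhat _ _ a => ?_⟩
    rw [hall a]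
  · push_neg at hall
    obtain ⟨a₀, ha₀⟩ := hall
    set S : A → ℝ := fun a => ∑ i, θstar i * φ a i with hS
    set E : Finset A := Finset.univ.erase o with hE
    have hEne : E.Nonempty := ⟨a₀, Finset.mem_erase.2 ⟨ha₀, Finset.mem_univ _⟩⟩
    set δ : ℝ := (E.image (fun a => S o - S a)).min' (hEne.image _) with hδ
    have hδmem : δ ∈ E.image (fun a => S o - S a) := Finset.min'_mem _ _
    have hδpos : 0 < δ := by
      obtain ⟨a, ha, hEq⟩ := Finset.mem_image.1 hδmem
      have := hund a (Finset.mem_erase.1 ha).1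
      rw [← hEq]; linarith
    have hδle : ∀ a ∈ E, δ ≤ S o - S a := fun a ha =>
      Finset.min'_le _ _ (Finset.mem_image_of_mem _ ha)
    set n : ℕ := Fintype.card A with hn
    have hn1 : 1 ≤ (n : ℝ) := by exact_mod_cast Fintype.card_pos
    set c : ℝ := (Real.log n + 1) / δ with hc
    have hcpos : 0 < c := by
      apply div_pos _ hδpos
      have : 0 ≤ Real.log n := Real.log_nonneg hn1
      linarith
    refine ⟨max 1 (c * ‖θstar‖), lt_of_lt_of_le one_pos (le_max_left _ _),
      fun θhat hθnorm hmax a => ?_⟩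
    by_contra hcon
    push_neg at hcon
    have hlt : softmaxProbE φ o θhat < 1/2 := softmax_lt_half φ o θhat a hcon
    -- now show softmaxProbE φ o (c • θstar) > 1/2
    have hnormc : ‖(c • θstar : EuclideanSpace ℝ (Fin d))‖ ≤ max 1 (c * ‖θstar‖) := by
      rw [norm_smul]
      simp [abs_of_pos hcpos]
    have hscale : ∀ b : A, (∑ i, (c • θstar : EuclideanSpace ℝ (Fin d)) i * φ b i) = c * S b := by
      intro b
      rw [Finset.mul_sum]
      refine Finset.sum_congr rfl fun i _ => ?_
      simp [mul_assoc]
    have hgt : 1/2 < softmaxProbE φ o (c • θstar) := by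
      rw [softmaxProbE]
      have hD : 0 < ∑ b : A, Real.exp (∑ i, (c • θstar : EuclideanSpace ℝ (Fin d)) i * φ b i) :=
        denom_pos _
      rw [lt_div_iff₀ hD]
      -- goal: 1/2 * D < exp (c*S o)
      have hsplit : (∑ b : A, Real.exp (∑ i, (c • θstar : EuclideanSpace ℝ (Fin d)) i * φ b i))
          = Real.exp (c * S o) + ∑ b ∈ E, Real.exp (c * S b) := by
        simp_rw [hscale]
        rw [hE, ← Finset.add_sum_erase _ _ (Finset.mem_univ o)]
      have hcδ : c * δ = Real.log n + 1 := by
        rw [hc, div_mul_cancel₀ _ hδpos.ne']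
      have hbound : ∑ b ∈ E, Real.exp (c * S b)
          ≤ (E.card : ℝ) * Real.exp (c * S o - (Real.log n + 1)) := by
        calc ∑ b ∈ E, Real.exp (c * S b)
            ≤ ∑ _b ∈ E, Real.exp (c * S o - (Real.log n + 1)) := by
              refine Finset.sum_le_sum fun b hb => ?_
              apply Real.exp_le_exp.2
              have := hδle b hb
              nlinarith
          _ = (E.card : ℝ) * Real.exp (c * S o - (Real.log n + 1)) := by
              rw [Finset.sum_const, nsmul_eq_mul]
      have hEcard : (E.card : ℝ) ≤ (n : ℝ) := by
        exact_mod_cast Finset.card_le_card (Finset.subset_univ E)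
      have hexp : Real.exp (c * S o - (Real.log n + 1))
          = Real.exp (c * S o) / ((n : ℝ) * Real.exp 1) := by
        rw [Real.exp_sub, Real.exp_add, Real.exp_log (by linarith : (0:ℝ) < n)]
      have hnpos : (0:ℝ) < n := by linarith
      have he2 : (2:ℝ) < Real.exp 1 := by
        have := Real.add_one_lt_exp (x := 1) one_ne_zero
        linarith
      have hsumlt : ∑ b ∈ E, Real.exp (c * S b) < Real.exp (c * S o) := by
        calc ∑ b ∈ E, Real.exp (c * S b)
            ≤ (E.card : ℝ) * Real.exp (c * S o - (Real.log n + 1)) := hbound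
          _ ≤ (n : ℝ) * (Real.exp (c * S o) / ((n : ℝ) * Real.exp 1)) := by
              rw [hexp]
              exact mul_le_mul_of_nonneg_right hEcard (by positivity)
          _ = Real.exp (c * S o) / Real.exp 1 := by
              field_simp
          _ < Real.exp (c * S o) := by
              rw [div_lt_iff₀ (by positivity)]
              nlinarith [Real.exp_pos (c * S o)]
      rw [hsplit, hscale]
      nlinarith [Real.exp_pos (c * S o)]
    exact absurd (hmax (c • θstar) hnormc) (not_le.2 (lt_of_lt_of_le hlt hgt.le))
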